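/- Existence and uniqueness of the Fréchet mean under the log-Cholesky metric (condition (A1) is automatically satisfied): let Y be a random element of Sym⁺(m) such that chol(L(Y)) is measurable and E‖chol(L(Y))‖_F² < ∞. Then the Fréchet function F(S) := E[d_LC(S, Y)²] is finite for every S ∈ Sym⁺(m) and has a unique minimizer μ over Sym⁺(m), characterized by chol(L(μ)) = E[chol(L(Y))]; moreover F(S) − F(μ) = d_LC(S, μ)² for every S ∈ Sym⁺(m). -/

import Mathlib

open Matrix MeasureTheory

/-- The Frobenius norm of an `m × m` real matrix. -/
noncomputable def frobNorm {m : ℕ} (A : Matrix (Fin m) (Fin m) ℝ) : ℝ :=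
  Real.sqrt (∑ i, ∑ j, (A i j) ^ 2)

/-- For a lower triangular matrix `L`, `chol(L) := ⌊L⌋ + mlog(𝔻(L))` is the sum of the strictly
lower triangular part of `L` and the diagonal matrix whose `k`-th diagonal entry is
`log(L k k)`. -/
noncomputable def cholMap {m : ℕ} (L : Matrix (Fin m) (Fin m) ℝ) : Matrix (Fin m) (Fin m) ℝ :=
  Matrix.of fun i j => if j < i then L i j else if i = j then Real.log (L i i) else 0

/-! ### Auxiliary lemmas -/

lemma frobNorm_sq {m : ℕ} (A : Matrix (Fin m) (Fin m) ℝ) :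
    frobNorm A ^ 2 = ∑ i, ∑ j, (A i j) ^ 2 :=
  Real.sq_sqrt (by positivity)

lemma entry_sq_le {m : ℕ} (A : Matrix (Fin m) (Fin m) ℝ) (i j : Fin m) :
    (A i j) ^ 2 ≤ frobNorm A ^ 2 := by
  rw [frobNorm_sq]
  calc (A i j)^2 ≤ ∑ j', (A i j')^2 :=
        Finset.single_le_sum (f := fun j' => (A i j')^2) (fun _ _ => sq_nonneg _)
          (Finset.mem_univ j)
    _ ≤ ∑ i', ∑ j', (A i' j')^2 :=
        Finset.single_le_sum (f := fun i' => ∑ j', (A i' j')^2)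
          (fun _ _ => Finset.sum_nonneg fun _ _ => sq_nonneg _) (Finset.mem_univ i)

lemma lowerMul_apply {m : ℕ} (L : Matrix (Fin m) (Fin m) ℝ)
    (hL : ∀ i j : Fin m, i < j → L i j = 0) (i j : Fin m) :
    (L * Lᵀ) i j = L i j * L j j + ∑ k ∈ Finset.Iio j, L i k * L j k := by
  rw [Matrix.mul_apply]
  simp only [Matrix.transpose_apply]
  rw [← Finset.sum_subset (Finset.subset_univ (Finset.Iic j))
    (fun k _ hk => by rw [hL j k (by simpa using hk), mul_zero])]
  rw [← Finset.Iio_insert, Finset.sum_insert (by simp)]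

/-- Uniqueness of the Cholesky factorization. -/
lemma chol_unique {m : ℕ} (L₁ L₂ : Matrix (Fin m) (Fin m) ℝ)
    (h₁ : ∀ i j : Fin m, i < j → L₁ i j = 0) (h₂ : ∀ i j : Fin m, i < j → L₂ i j = 0)
    (d₁ : ∀ i, 0 < L₁ i i) (d₂ : ∀ i, 0 < L₂ i i)
    (h : L₁ * L₁ᵀ = L₂ * L₂ᵀ) : L₁ = L₂ := by
  have key : ∀ n : ℕ, ∀ j : Fin m, j.val = n → ∀ i, L₁ i j = L₂ i j := by
    intro n
    induction n using Nat.strong_induction_on with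
    | _ n IH =>
      intro j hj
      have IH' : ∀ k : Fin m, k < j → ∀ i', L₁ i' k = L₂ i' k := by
        intro k hk i'
        exact IH k.val (hj ▸ hk) k rfl i'
      have hsum : ∀ i : Fin m, ∑ k ∈ Finset.Iio j, L₁ i k * L₁ j k
          = ∑ k ∈ Finset.Iio j, L₂ i k * L₂ j k := by
        intro i
        refine Finset.sum_congr rfl fun k hk => ?_
        have hkj : k < j := Finset.mem_Iio.mp hk
        rw [IH' k hkj i, IH' k hkj j]
      have hdiag : L₁ j j = L₂ j j := by
        have e := congrFun (congrFun h j) j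
        rw [lowerMul_apply L₁ h₁ j j, lowerMul_apply L₂ h₂ j j, hsum j] at e
        have e2 : L₁ j j * L₁ j j = L₂ j j * L₂ j j := by linarith
        exact (mul_self_inj (d₁ j).le (d₂ j).le).mp e2
      intro i
      rcases lt_trichotomy i j with hij | hij | hij
      · rw [h₁ i j hij, h₂ i j hij]
      · rw [hij]; exact hdiag
      · have e := congrFun (congrFun h i) j
        rw [lowerMul_apply L₁ h₁ i j, lowerMul_apply L₂ h₂ i j, hsum i] at e
        have e2 : L₁ i j * L₁ j j = L₂ i j * L₂ j j := by linarith
        rw [hdiag] at e2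
        exact mul_right_cancel₀ (d₂ j).ne' e2
  ext i j
  exact key j.val j rfl i

lemma posDef_lower {m : ℕ} (L : Matrix (Fin m) (Fin m) ℝ)
    (hL : ∀ i j : Fin m, i < j → L i j = 0) (d : ∀ i, 0 < L i i) :
    (L * Lᵀ).PosDef := by
  have hdet : L.det ≠ 0 := by
    have hbt : L.BlockTriangular OrderDual.toDual := fun i j hij => hL i j hij
    rw [Matrix.det_of_lowerTriangular L hbt]
    exact (Finset.prod_pos fun i _ => d i).ne'
  rw [Matrix.posDef_iff_dotProduct_mulVec]
  constructor
  · rw [Matrix.IsHermitian, Matrix.conjTranspose_eq_transpose_of_trivial, Matrix.transpose_mul,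
      Matrix.transpose_transpose]
  · intro x hx
    have hy : Lᵀ *ᵥ x ≠ 0 := by
      intro h0
      apply hx
      have hinj : Function.Injective (Lᵀ).mulVec :=
        Matrix.mulVec_injective_iff_isUnit.mpr ((Matrix.isUnit_iff_isUnit_det _).mpr
          (by simpa [Matrix.det_transpose] using Ne.isUnit hdet))
      exact hinj (by rw [h0, Matrix.mulVec_zero])
    have hq : star x ⬝ᵥ (L * Lᵀ) *ᵥ x = (Lᵀ *ᵥ x) ⬝ᵥ star (Lᵀ *ᵥ x) := by
      rw [star_trivial, star_trivial, ← Matrix.mulVec_mulVec, Matrix.dotProduct_mulVec,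
        ← Matrix.mulVec_transpose]
    rw [hq]
    exact Matrix.dotProduct_self_star_pos_iff.mpr hy

lemma cholMap_inj {m : ℕ} (L₁ L₂ : Matrix (Fin m) (Fin m) ℝ)
    (h₁ : ∀ i j : Fin m, i < j → L₁ i j = 0) (h₂ : ∀ i j : Fin m, i < j → L₂ i j = 0)
    (d₁ : ∀ i, 0 < L₁ i i) (d₂ : ∀ i, 0 < L₂ i i)
    (h : cholMap L₁ = cholMap L₂) : L₁ = L₂ := by
  ext i j
  have he := congrFun (congrFun h i) j
  simp only [cholMap, Matrix.of_apply] at he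
  rcases lt_trichotomy j i with hji | hji | hji
  · simpa [hji] using he
  · subst hji
    have he' : Real.log (L₁ j j) = Real.log (L₂ j j) := by simpa using he
    calc L₁ j j = Real.exp (Real.log (L₁ j j)) := (Real.exp_log (d₁ j)).symm
      _ = Real.exp (Real.log (L₂ j j)) := by rw [he']
      _ = L₂ j j := Real.exp_log (d₂ j)
  · rw [h₁ i j hji, h₂ i j hji]

section Aux
variable {m : ℕ} {Ω : Type*} [MeasurableSpace Ω] (P : Measure Ω) [IsProbabilityMeasure P]
  (g : Fin m → Fin m → Ω → ℝ)

omit [IsProbabilityMeasure P] in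
lemma sq_int (hmeas : ∀ i j, Measurable (g i j))
    (hL2 : Integrable (fun ω => (frobNorm (Matrix.of fun i j => g i j ω)) ^ 2) P)
    (i j : Fin m) : Integrable (fun ω => (g i j ω) ^ 2) P := by
  refine hL2.mono' ((hmeas i j).pow_const 2).aestronglyMeasurable ?_
  filter_upwards with ω
  rw [Real.norm_eq_abs, abs_of_nonneg (sq_nonneg _)]
  simpa using entry_sq_le (Matrix.of fun i j => g i j ω) i j

lemma lin_int (hmeas : ∀ i j, Measurable (g i j))
    (hL2 : Integrable (fun ω => (frobNorm (Matrix.of fun i j => g i j ω)) ^ 2) P)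
    (i j : Fin m) : Integrable (g i j) P := by
  have h2 := sq_int P g hmeas hL2 i j
  have hint : Integrable (fun ω => (1 + (g i j ω)^2)/2) P :=
    ((integrable_const 1).add h2).div_const 2
  refine hint.mono' (hmeas i j).aestronglyMeasurable ?_
  filter_upwards with ω
  rw [Real.norm_eq_abs]
  nlinarith [sq_nonneg (|g i j ω| - 1), sq_abs (g i j ω)]

lemma affine_sq_int (hmeas : ∀ i j, Measurable (g i j))
    (hL2 : Integrable (fun ω => (frobNorm (Matrix.of fun i j => g i j ω)) ^ 2) P)
    (a : ℝ) (i j : Fin m) : Integrable (fun ω => (a - g i j ω) ^ 2) P := by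
  have h2 := sq_int P g hmeas hL2 i j
  have h1 := lin_int P g hmeas hL2 i j
  have hint : Integrable (fun ω => a^2 - 2*a*(g i j ω) + (g i j ω)^2) P :=
    ((integrable_const (a^2)).sub (h1.const_mul (2*a))).add h2
  refine hint.congr ?_
  filter_upwards with ω
  ring

lemma key_identity (hmeas : ∀ i j, Measurable (g i j))
    (hL2 : Integrable (fun ω => (frobNorm (Matrix.of fun i j => g i j ω)) ^ 2) P)
    (a : ℝ) (i j : Fin m) :
    ∫ ω, (a - g i j ω) ^ 2 ∂P
      = (a - ∫ ω, g i j ω ∂P) ^ 2 + ∫ ω, ((∫ ω', g i j ω' ∂P) - g i j ω) ^ 2 ∂P := by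
  set c := ∫ ω, g i j ω ∂P with hc
  have h1 := lin_int P g hmeas hL2 i j
  have hcf : Integrable (fun ω => (c - g i j ω)^2) P := affine_sq_int P g hmeas hL2 c i j
  have hcf1 : Integrable (fun ω => c - g i j ω) P := (integrable_const c).sub h1
  have step1 : ∫ ω, (a - g i j ω) ^ 2 ∂P
      = ∫ ω, ((a - c)^2 + ((2*(a-c))*(c - g i j ω) + (c - g i j ω)^2)) ∂P := by
    congr 1; funext ω; ring
  have hA : Integrable (fun ω => 2*(a-c)*(c - g i j ω) + (c - g i j ω)^2) P :=
    (hcf1.const_mul _).add hcf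
  rw [step1, integral_add (integrable_const _) hA,
    integral_add (hcf1.const_mul (2*(a-c))) hcf, integral_const_mul,
    integral_sub (integrable_const c) h1, integral_const]
  simp [← hc]

end Aux

/-- Existence and uniqueness of the Fréchet mean under the log-Cholesky metric: if `Y` is a
random element of `Sym⁺(m)` with `chol(L(Y))` measurable and `E‖chol(L(Y))‖_F² < ∞`, then the
Fréchet function `F(S) := E[d_LC(S,Y)²]` is finite for every `S ∈ Sym⁺(m)` and has a unique
minimizer `μ` over `Sym⁺(m)`, characterized by `chol(L(μ)) = E[chol(L(Y))]` (entrywise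
expectation); moreover `F(S) − F(μ) = d_LC(S, μ)²` for every `S ∈ Sym⁺(m)`. -/
theorem logCholesky_frechet_mean (m : ℕ) (hm : 0 < m)
    (Lfac : Matrix (Fin m) (Fin m) ℝ → Matrix (Fin m) (Fin m) ℝ)
    (hLfac_lower : ∀ S : Matrix (Fin m) (Fin m) ℝ, S.PosDef →
      ∀ i j : Fin m, i < j → Lfac S i j = 0)
    (hLfac_diag : ∀ S : Matrix (Fin m) (Fin m) ℝ, S.PosDef → ∀ i : Fin m, 0 < Lfac S i i)
    (hLfac_mul : ∀ S : Matrix (Fin m) (Fin m) ℝ, S.PosDef → S = Lfac S * (Lfac S)ᵀ)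
    {Ω : Type*} [MeasurableSpace Ω] (P : Measure Ω) [IsProbabilityMeasure P]
    (Y : Ω → Matrix (Fin m) (Fin m) ℝ)
    (hYpd : ∀ ω, (Y ω).PosDef)
    (hmeas : ∀ i j : Fin m, Measurable fun ω => cholMap (Lfac (Y ω)) i j)
    (hL2 : Integrable (fun ω => (frobNorm (cholMap (Lfac (Y ω)))) ^ 2) P)
    (F : Matrix (Fin m) (Fin m) ℝ → ℝ)
    (hF : ∀ S, F S = ∫ ω, (frobNorm (cholMap (Lfac S) - cholMap (Lfac (Y ω)))) ^ 2 ∂P) :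
    -- F is finite on Sym⁺(m) (the defining integrand is integrable)
    (∀ S : Matrix (Fin m) (Fin m) ℝ, S.PosDef →
      Integrable (fun ω => (frobNorm (cholMap (Lfac S) - cholMap (Lfac (Y ω)))) ^ 2) P) ∧
    -- there is a unique minimizer μ of F over Sym⁺(m), characterized by
    -- chol(L(μ)) = E[chol(L(Y))], and F(S) − F(μ) = d_LC(S,μ)² for every S ∈ Sym⁺(m)
    (∃ μ : Matrix (Fin m) (Fin m) ℝ, μ.PosDef ∧
      cholMap (Lfac μ) = (Matrix.of fun i j => ∫ ω, cholMap (Lfac (Y ω)) i j ∂P) ∧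
      (∀ S : Matrix (Fin m) (Fin m) ℝ, S.PosDef → F μ ≤ F S) ∧
      (∀ S : Matrix (Fin m) (Fin m) ℝ, S.PosDef → F S = F μ → S = μ) ∧
      (∀ S : Matrix (Fin m) (Fin m) ℝ, S.PosDef →
        F S - F μ = (frobNorm (cholMap (Lfac S) - cholMap (Lfac μ))) ^ 2)) := by
  classical
  set g : Fin m → Fin m → Ω → ℝ := fun i j ω => cholMap (Lfac (Y ω)) i j with hg
  have hmeas' : ∀ i j, Measurable (g i j) := hmeas
  have hL2' : Integrable (fun ω => (frobNorm (Matrix.of fun i j => g i j ω)) ^ 2) P := hL2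
  set C : Matrix (Fin m) (Fin m) ℝ := Matrix.of fun i j => ∫ ω, g i j ω ∂P with hC
  have hterm : ∀ (a : ℝ) (i j : Fin m), Integrable (fun ω => (a - g i j ω)^2) P :=
    fun a i j => affine_sq_int P g hmeas' hL2' a i j
  have hrw : ∀ (A : Matrix (Fin m) (Fin m) ℝ),
      (fun ω => (frobNorm (A - cholMap (Lfac (Y ω))))^2)
        = fun ω => ∑ i, ∑ j, (A i j - g i j ω)^2 := by
    intro A
    funext ω
    rw [frobNorm_sq]
    simp [Matrix.sub_apply, hg]
  have hintS : ∀ (A : Matrix (Fin m) (Fin m) ℝ),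
      Integrable (fun ω => (frobNorm (A - cholMap (Lfac (Y ω))))^2) P := by
    intro A
    rw [hrw A]
    exact integrable_finset_sum _ fun i _ => integrable_finset_sum _ fun j _ => hterm _ i j
  set G : ℝ := ∑ i, ∑ j, ∫ ω, (C i j - g i j ω)^2 ∂P with hG
  have hform : ∀ (A : Matrix (Fin m) (Fin m) ℝ),
      ∫ ω, (frobNorm (A - cholMap (Lfac (Y ω))))^2 ∂P
        = (∑ i, ∑ j, (A i j - C i j)^2) + G := by
    intro A
    rw [hrw A]
    calc ∫ ω, ∑ i, ∑ j, (A i j - g i j ω)^2 ∂P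
        = ∑ i, ∑ j, ∫ ω, (A i j - g i j ω)^2 ∂P := by
          rw [integral_finset_sum _ (f := fun i ω => ∑ j, (A i j - g i j ω)^2)
            (fun i _ => integrable_finset_sum _ fun j _ => hterm _ i j)]
          exact Finset.sum_congr rfl fun i _ => integral_finset_sum _ (f := fun j ω => (A i j - g i j ω)^2) fun j _ => hterm _ i j
      _ = ∑ i, ∑ j, ((A i j - C i j)^2 + ∫ ω, (C i j - g i j ω)^2 ∂P) := by
          refine Finset.sum_congr rfl fun i _ => Finset.sum_congr rfl fun j _ => ?_
          exact key_identity P g hmeas' hL2' (A i j) i j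
      _ = (∑ i, ∑ j, (A i j - C i j)^2) + G := by
          rw [hG]
          simp [Finset.sum_add_distrib]
  -- construction of μ
  have hCzero : ∀ i j : Fin m, i < j → C i j = 0 := by
    intro i j hij
    have h0 : (fun ω => g i j ω) = fun _ => (0 : ℝ) := by
      funext ω
      simp [hg, cholMap, asymm hij, hij.ne]
    calc C i j = ∫ ω, g i j ω ∂P := rfl
      _ = ∫ _, (0:ℝ) ∂P := by rw [h0]
      _ = 0 := integral_zero _ _
  set Lμ : Matrix (Fin m) (Fin m) ℝ :=
    Matrix.of fun i j => if j < i then C i j else if i = j then Real.exp (C i i) else 0 with hLμ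
  have hlow : ∀ i j : Fin m, i < j → Lμ i j = 0 := by
    intro i j hij
    simp [hLμ, asymm hij, hij.ne]
  have hdiagL : ∀ i, 0 < Lμ i i := by
    intro i
    simp [hLμ, Real.exp_pos]
  set μ : Matrix (Fin m) (Fin m) ℝ := Lμ * Lμᵀ with hμ
  have hpd : μ.PosDef := posDef_lower Lμ hlow hdiagL
  have hLfacμ : Lfac μ = Lμ :=
    chol_unique _ _ (hLfac_lower μ hpd) hlow (hLfac_diag μ hpd) hdiagL
      (by rw [← hLfac_mul μ hpd])
  have hcholμ : cholMap (Lfac μ) = C := by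
    rw [hLfacμ]
    ext i j
    rcases lt_trichotomy j i with hji | hji | hji
    · simp [cholMap, hLμ, hji]
    · subst hji
      simp [cholMap, hLμ, Real.log_exp]
    · simp [cholMap, hLμ, asymm hji, hji.ne, hCzero i j hji]
  have hFS : ∀ S, F S = (∑ i, ∑ j, (cholMap (Lfac S) i j - C i j)^2) + G := by
    intro S
    rw [hF S, hform]
  have hFμ : F μ = G := by
    rw [hFS μ, hcholμ]
    simp
  have hdiff : ∀ S : Matrix (Fin m) (Fin m) ℝ,
      F S - F μ = (frobNorm (cholMap (Lfac S) - cholMap (Lfac μ))) ^ 2 := by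
    intro S
    rw [hFS S, hFμ, frobNorm_sq, hcholμ]
    simp [Matrix.sub_apply]
  refine ⟨fun S _ => hintS (cholMap (Lfac S)), μ, hpd, by rw [hcholμ, hC], ?_, ?_, fun S _ => hdiff S⟩
  · intro S _
    have h0 : 0 ≤ ∑ i, ∑ j, (cholMap (Lfac S) i j - C i j)^2 := by positivity
    rw [hFS S, hFμ]
    linarith
  · intro S hSpd hFe
    have h0 : ∑ i, ∑ j, (cholMap (Lfac S) i j - C i j)^2 = 0 := by
      have := hFS S
      rw [hFe, hFμ] at this
      linarith
    have hentry : ∀ i j : Fin m, cholMap (Lfac S) i j = C i j := by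
      intro i j
      have hi := (Finset.sum_eq_zero_iff_of_nonneg
        (fun i _ => Finset.sum_nonneg fun j _ => sq_nonneg _)).mp h0 i (Finset.mem_univ i)
      have hj := (Finset.sum_eq_zero_iff_of_nonneg
        (fun j _ => sq_nonneg _)).mp hi j (Finset.mem_univ j)
      have := sq_eq_zero_iff.mp hj
      linarith
    have hchol : cholMap (Lfac S) = cholMap (Lfac μ) := by
      rw [hcholμ]
      ext i j
      exact hentry i j
    have hLeq : Lfac S = Lfac μ :=
      cholMap_inj _ _ (hLfac_lower S hSpd) (hLfac_lower μ hpd)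
        (hLfac_diag S hSpd) (hLfac_diag μ hpd) hchol
    rw [hLfac_mul S hSpd, hLeq, ← hLfac_mul μ hpd]
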